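/- (Theorem 2, Backward Regression single-step guarantee.) Let Φ be a real n×m matrix with full column rank and let σ > 0 satisfy σ‖v‖₂ ≤ ‖Φv‖₂ for all v ∈ ℝ^m. Suppose y = Φx + ε where x has support S = supp(x), and assume (σ/2)·min_{i∈S}|x_i| > ‖ε‖₂. Then for every index set A with S ⊆ A ⊆ {1,…,m}, every i ∈ S and every j ∈ A \ S: (min over z with supp(z) ⊆ A \ {j} of ‖y − Φz‖₂) < (min over z with supp(z) ⊆ A \ {i} of ‖y − Φz‖₂). Consequently the atom whose deletion least increases the residual always lies outside S while A strictly contains S, so Backward Regression recovers S in m − |S| steps. -/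

import Mathlib

open Matrix

/-- The Euclidean (ℓ₂) norm of a finitely indexed real vector. -/
noncomputable def enorm2 {ι : Type*} [Fintype ι] (v : ι → ℝ) : ℝ :=
  ‖(WithLp.equiv 2 (ι → ℝ)).symm v‖

/-- The restricted least-squares residual norm: the infimum of `‖y − Φz‖₂` over
vectors `z` supported inside the index set `B`. -/
noncomputable def resNorm {n m : ℕ} (Φ : Matrix (Fin n) (Fin m) ℝ)
    (y : Fin n → ℝ) (B : Finset (Fin m)) : ℝ :=
  sInf {c : ℝ | ∃ z : Fin m → ℝ, (∀ l, z l ≠ 0 → l ∈ B) ∧ c = enorm2 (y - Φ.mulVec z)}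

lemma enorm_nonneg' {ι : Type*} [Fintype ι] (v : ι → ℝ) : 0 ≤ enorm2 v :=
  norm_nonneg _

lemma enorm_add_le' {ι : Type*} [Fintype ι] (a b : ι → ℝ) :
    enorm2 (a + b) ≤ enorm2 a + enorm2 b := by
  have : (WithLp.equiv 2 (ι → ℝ)).symm (a + b) =
      (WithLp.equiv 2 (ι → ℝ)).symm a + (WithLp.equiv 2 (ι → ℝ)).symm b := rfl
  simp only [enorm2, this]
  exact norm_add_le _ _

lemma enorm_neg' {ι : Type*} [Fintype ι] (a : ι → ℝ) : enorm2 (-a) = enorm2 a := by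
  have : (WithLp.equiv 2 (ι → ℝ)).symm (-a) = -(WithLp.equiv 2 (ι → ℝ)).symm a := rfl
  simp only [enorm2, this, norm_neg]

lemma coord_le_enorm {ι : Type*} [Fintype ι] (v : ι → ℝ) (i : ι) :
    |v i| ≤ enorm2 v := by
  have h : enorm2 v = Real.sqrt (∑ l, ‖v l‖ ^ 2) := by
    simpa [enorm2] using EuclideanSpace.norm_eq ((WithLp.equiv 2 (ι → ℝ)).symm v)
  rw [h, ← Real.sqrt_sq_eq_abs]
  apply Real.sqrt_le_sqrt
  have := Finset.single_le_sum (f := fun l => ‖v l‖ ^ 2)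
    (fun l _ => sq_nonneg _) (Finset.mem_univ i)
  simpa [Real.norm_eq_abs, sq_abs] using this

/-- Theorem 2, Backward Regression single-step guarantee.
If `σ > 0` is a lower singular-value bound for the full-column-rank matrix `Φ`,
`y = Φx + ε` with `(σ/2)·min_{i∈S}|x i| > ‖ε‖₂` where `S = supp x`, then for any
active set `A ⊇ S`, deleting any `j ∈ A \ S` yields a strictly smaller residual
than deleting any `i ∈ S`; hence Backward Regression never deletes an atom of `S`
while `S ⊊ A`, and recovers `S` in `m − |S|` steps. -/
theorem backward_regression_single_step_guarantee {n m : ℕ}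
    (Φ : Matrix (Fin n) (Fin m) ℝ)
    (hΦ : Function.Injective Φ.mulVec)
    (σ : ℝ) (hσ : 0 < σ)
    (hlow : ∀ v : Fin m → ℝ, σ * enorm2 v ≤ enorm2 (Φ.mulVec v))
    (x : Fin m → ℝ) (ε : Fin n → ℝ) (y : Fin n → ℝ)
    (hy : y = Φ.mulVec x + ε)
    (S : Finset (Fin m)) (hS : ∀ i, i ∈ S ↔ x i ≠ 0) (hne : S.Nonempty)
    (hnoise : σ / 2 * S.inf' hne (fun l => |x l|) > enorm2 ε) :
    ∀ A : Finset (Fin m), S ⊆ A →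
      ∀ i ∈ S, ∀ j ∈ A \ S,
        resNorm Φ y (A.erase j) < resNorm Φ y (A.erase i) := by
  intro A hSA i hi j hj
  obtain ⟨hjA, hjS⟩ := Finset.mem_sdiff.mp hj
  set μ := S.inf' hne fun l => |x l| with hμ
  have hμ0 : 0 < μ := by
    have := enorm_nonneg' ε
    nlinarith [hnoise]
  have hub : resNorm Φ y (A.erase j) ≤ enorm2 ε := by
    apply csInf_le
    · refine ⟨0, ?_⟩
      rintro c ⟨z, -, rfl⟩
      exact enorm_nonneg' _
    · refine ⟨x, ?_, ?_⟩
      · intro l hl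
        have hlS : l ∈ S := (hS l).mpr hl
        exact Finset.mem_erase.mpr ⟨fun h => hjS (h ▸ hlS), hSA hlS⟩
      · have : y - Φ.mulVec x = ε := by rw [hy]; abel
        rw [this]
  have hlb : σ * μ - enorm2 ε ≤ resNorm Φ y (A.erase i) := by
    apply le_csInf
    · exact ⟨enorm2 (y - Φ.mulVec 0), 0, by simp, rfl⟩
    · rintro c ⟨z, hz, rfl⟩
      have hzi : z i = 0 := by
        by_contra h
        exact (Finset.mem_erase.mp (hz i h)).1 rfl
      have h1 : y - Φ.mulVec z = Φ.mulVec (x - z) + ε := by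
        rw [hy, Matrix.mulVec_sub]; abel
      rw [h1]
      have h2 : enorm2 (Φ.mulVec (x - z)) ≤ enorm2 (Φ.mulVec (x - z) + ε) + enorm2 ε := by
        have := enorm_add_le' (Φ.mulVec (x - z) + ε) (-ε)
        simpa [enorm_neg'] using this
      have h3 : |x i| ≤ enorm2 (x - z) := by
        have := coord_le_enorm (x - z) i
        simpa [hzi] using this
      have h4 : μ ≤ |x i| := Finset.inf'_le _ hi
      have h5 := hlow (x - z)
      nlinarith
  have : enorm2 ε < σ * μ - enorm2 ε := by nlinarith
  linarith
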